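/- Let V be a complex vector space of dimension d ≥ 7 with a nondegenerate symmetric bilinear form B. For i = 1, 2 let Lᵢ ⊆ V be a two-dimensional subspace on which B restricts nondegenerately, and let uᵢ ∈ Lᵢ^⊥ be a nonzero isotropic vector; set Wᵢ = (Lᵢ + ℂuᵢ)^⊥. Suppose 𝔥 ⊆ End(V) is a Lie subalgebra (commutator bracket) containing T_{uᵢ,w} for every w ∈ Wᵢ and both i = 1, 2. Then at least one of the following holds: (1) T_{u₁,u₂} ∈ 𝔥; (2) there exists v ∈ u₂^⊥ with v ∉ W₂ such that T_{u₂,v} ∈ 𝔥. -/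

import Mathlib

/-- For a symmetric bilinear form `B` on `V` and vectors `a b : V`, the endomorphism
`x ↦ B(x,b)•a − B(x,a)•b`, which corresponds to `a ∧ b ∈ Λ²V ≅ so(V,B)`. -/
noncomputable def Tmap {K V : Type*} [CommRing K] [AddCommGroup V] [Module K V]
    (B : V →ₗ[K] V →ₗ[K] K) (a b : V) : Module.End K V :=
  (LinearMap.toSpanSingleton K V a).comp (B.flip b) -
    (LinearMap.toSpanSingleton K V b).comp (B.flip a)

attribute [local instance 100] LieRing.ofAssociativeRing

section Aux

variable {V : Type*} [AddCommGroup V] [Module ℂ V]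

lemma Tmap_apply (B : V →ₗ[ℂ] V →ₗ[ℂ] ℂ) (a b x : V) :
    Tmap B a b x = B x b • a - B x a • b := by
  simp [Tmap, LinearMap.toSpanSingleton_apply]

lemma Tmap_self (B : V →ₗ[ℂ] V →ₗ[ℂ] ℂ) (a : V) : Tmap B a a = 0 := sub_self _

lemma Tmap_swap (B : V →ₗ[ℂ] V →ₗ[ℂ] ℂ) (a b : V) : Tmap B a b = - Tmap B b a := by
  simp [Tmap]

lemma lie_Tmap (B : V →ₗ[ℂ] V →ₗ[ℂ] ℂ) (hsymm : ∀ x y : V, B x y = B y x) (a b c d : V) :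
    ⁅Tmap B a b, Tmap B c d⁆ =
      B b c • Tmap B a d + B a d • Tmap B b c - B b d • Tmap B a c - B a c • Tmap B b d := by
  ext x
  simp only [Ring.lie_def, LinearMap.sub_apply, LinearMap.add_apply, LinearMap.smul_apply,
    Module.End.mul_apply, Tmap_apply, map_sub, map_smul, LinearMap.sub_apply, smul_eq_mul,
    LinearMap.smul_apply, smul_sub, smul_smul]
  rw [hsymm c b, hsymm c a, hsymm d b, hsymm d a]
  module

lemma mem_of_smul_mem (𝔥 : LieSubalgebra ℂ (Module.End ℂ V)) {c : ℂ} (hc : c ≠ 0)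
    {X : Module.End ℂ V} (h : c • X ∈ 𝔥) : X ∈ 𝔥 := by
  have := 𝔥.smul_mem c⁻¹ h
  rwa [smul_smul, inv_mul_cancel₀ hc, one_smul] at this

lemma exists_pair [FiniteDimensional ℂ V] (L : Submodule ℂ V) (hL : Module.finrank ℂ L = 2) :
    ∃ a₀ a₁ : V, a₀ ∈ L ∧ a₁ ∈ L ∧ ∀ l ∈ L, ∃ c₀ c₁ : ℂ, l = c₀ • a₀ + c₁ • a₁ := by
  let b : Module.Basis (Fin 2) ℂ L := Module.finBasisOfFinrankEq ℂ L hL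
  refine ⟨(b 0 : V), (b 1 : V), (b 0).2, (b 1).2, fun l hl => ?_⟩
  refine ⟨b.repr ⟨l, hl⟩ 0, b.repr ⟨l, hl⟩ 1, ?_⟩
  have := b.sum_repr ⟨l, hl⟩
  have h2 := congrArg (Submodule.subtype L) this
  simp only [map_sum, map_smul, Submodule.coe_subtype, Fin.sum_univ_two] at h2
  exact h2.symm

/-- If `w ⊥ W = (L + ℂu)^⊥` and `w ⊥ L`, with `u ⊥ L` and `L` 2-dimensional with `B`
nondegenerate on `L`, then `w` is a scalar multiple of `u`. -/
lemma scalar_of_perp [FiniteDimensional ℂ V] (B : V →ₗ[ℂ] V →ₗ[ℂ] ℂ)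
    (hsymm : ∀ x y : V, B x y = B y x) (hnd : ∀ x : V, (∀ y : V, B x y = 0) → x = 0)
    (L : Submodule ℂ V) (hL : Module.finrank ℂ L = 2)
    (hLnd : ∀ l ∈ L, (∀ l' ∈ L, B l l' = 0) → l = 0)
    (u : V) (huL : ∀ l ∈ L, B u l = 0) (w : V) (hwL : ∀ l ∈ L, B w l = 0)
    (hperp : ∀ x : V, B x u = 0 → (∀ l ∈ L, B x l = 0) → B x w = 0) :
    ∃ c : ℂ, w = c • u := by
  obtain ⟨a₀, a₁, ha₀, ha₁, hrep⟩ := exists_pair L hL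
  set F : Fin 3 → (V →ₗ[ℂ] ℂ) := ![B.flip u, B.flip a₀, B.flip a₁] with hF
  have hker : (⨅ i, LinearMap.ker (F i)) ≤ LinearMap.ker (B.flip w) := by
    intro x hx
    simp only [Submodule.mem_iInf, LinearMap.mem_ker] at hx
    have h0 := hx 0; have h1 := hx 1; have h2 := hx 2
    simp only [hF, Matrix.cons_val_zero, Matrix.cons_val_one, Matrix.head_cons,
      Matrix.cons_val_two, Matrix.tail_cons, LinearMap.flip_apply] at h0 h1 h2
    have hlx : ∀ l ∈ L, B x l = 0 := by
      intro l hl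
      obtain ⟨c₀, c₁, rfl⟩ := hrep l hl
      simp [map_add, map_smul, h1, h2]
    simp only [LinearMap.mem_ker, LinearMap.flip_apply]
    exact hperp x h0 hlx
  have hmem : B.flip w ∈ Submodule.span ℂ (Set.range F) := mem_span_of_iInf_ker_le_ker hker
  rw [Submodule.mem_span_range_iff_exists_fun] at hmem
  obtain ⟨c, hc⟩ := hmem
  simp only [Fin.sum_univ_three, hF, Matrix.cons_val_zero, Matrix.cons_val_one, Matrix.head_cons,
    Matrix.cons_val_two, Matrix.tail_cons] at hc
  have hw : w = c 0 • u + (c 1 • a₀ + c 2 • a₁) := by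
    have hflip : B.flip (c 0 • u + (c 1 • a₀ + c 2 • a₁)) = B.flip w := by
      rw [← hc]; simp only [map_add, map_smul]; abel
    have hz : ∀ y : V, B (w - (c 0 • u + (c 1 • a₀ + c 2 • a₁))) y = 0 := by
      intro y
      have := congrFun (congrArg DFunLike.coe hflip) y
      simp only [LinearMap.flip_apply] at this
      rw [map_sub, LinearMap.sub_apply, hsymm w y, hsymm _ y, this, sub_self]
    exact sub_eq_zero.mp (hnd _ hz)
  have hlmem : c 1 • a₀ + c 2 • a₁ ∈ L := L.add_mem (L.smul_mem _ ha₀) (L.smul_mem _ ha₁)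
  have hl0 : c 1 • a₀ + c 2 • a₁ = 0 := by
    refine hLnd _ hlmem fun l' hl' => ?_
    have h1 : B w l' = 0 := hwL l' hl'
    have h2 : B u l' = 0 := huL l' hl'
    rw [hw] at h1
    simpa [map_add, map_smul, h2] using h1
  exact ⟨c 0, by rw [hw, hl0, add_zero]⟩

end Aux

theorem stmt4 (V : Type*) [AddCommGroup V] [Module ℂ V] [FiniteDimensional ℂ V]
    (hd : 7 ≤ Module.finrank ℂ V)
    (B : V →ₗ[ℂ] V →ₗ[ℂ] ℂ) (hsymm : ∀ x y : V, B x y = B y x)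
    (hnd : ∀ x : V, (∀ y : V, B x y = 0) → x = 0)
    (L₁ L₂ : Submodule ℂ V)
    (hL₁ : Module.finrank ℂ L₁ = 2) (hL₂ : Module.finrank ℂ L₂ = 2)
    -- `B` restricts nondegenerately to `L₁` and `L₂`
    (hL₁nd : ∀ l ∈ L₁, (∀ l' ∈ L₁, B l l' = 0) → l = 0)
    (hL₂nd : ∀ l ∈ L₂, (∀ l' ∈ L₂, B l l' = 0) → l = 0)
    (u₁ u₂ : V) (hu₁ : u₁ ≠ 0) (hu₂ : u₂ ≠ 0)
    (hiso₁ : B u₁ u₁ = 0) (hiso₂ : B u₂ u₂ = 0)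
    (hu₁L : ∀ l ∈ L₁, B u₁ l = 0) (hu₂L : ∀ l ∈ L₂, B u₂ l = 0)
    (𝔥 : LieSubalgebra ℂ (Module.End ℂ V))
    -- `Wᵢ = (Lᵢ + ℂuᵢ)^⊥`: the elements orthogonal to `uᵢ` and to all of `Lᵢ`
    (h₁ : ∀ w : V, B w u₁ = 0 → (∀ l ∈ L₁, B w l = 0) → Tmap B u₁ w ∈ 𝔥)
    (h₂ : ∀ w : V, B w u₂ = 0 → (∀ l ∈ L₂, B w l = 0) → Tmap B u₂ w ∈ 𝔥) :
    Tmap B u₁ u₂ ∈ 𝔥 ∨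
      ∃ v : V, B v u₂ = 0 ∧ ¬ (∀ l ∈ L₂, B v l = 0) ∧ Tmap B u₂ v ∈ 𝔥 := by
  classical
  left
  obtain ⟨a₀, a₁, ha₀, ha₁, hrep₁⟩ := exists_pair L₁ hL₁
  obtain ⟨b₀, b₁, hb₀, hb₁, hrep₂⟩ := exists_pair L₂ hL₂
  -- find a nonzero `w` orthogonal to `u₁, u₂, L₁, L₂`
  set G : Fin 6 → (V →ₗ[ℂ] ℂ) :=
    ![B.flip u₁, B.flip u₂, B.flip a₀, B.flip a₁, B.flip b₀, B.flip b₁] with hG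
  set g : V →ₗ[ℂ] (Fin 6 → ℂ) := LinearMap.pi G with hg
  have hker : LinearMap.ker g ≠ ⊥ := by
    intro hbot
    have hinj : Function.Injective g := LinearMap.ker_eq_bot.mp hbot
    have := LinearMap.finrank_le_finrank_of_injective hinj
    rw [Module.finrank_pi ℂ] at this
    simp only [Fintype.card_fin] at this
    omega
  obtain ⟨w, hwker, hw0⟩ := Submodule.exists_mem_ne_zero_of_ne_bot hker
  have hwg : ∀ i, G i w = 0 := by
    intro i
    have := LinearMap.mem_ker.mp hwker
    exact congrFun this i
  have hw1 : B w u₁ = 0 := by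
    have := hwg 0; simpa [hG, LinearMap.flip_apply] using this
  have hw2 : B w u₂ = 0 := by
    have := hwg 1; simpa [hG, LinearMap.flip_apply] using this
  have hwa₀ : B w a₀ = 0 := by
    have := hwg 2; simpa [hG, LinearMap.flip_apply] using this
  have hwa₁ : B w a₁ = 0 := by
    have := hwg 3; simpa [hG, LinearMap.flip_apply] using this
  have hwb₀ : B w b₀ = 0 := by
    have := hwg 4; simpa [hG, LinearMap.flip_apply] using this
  have hwb₁ : B w b₁ = 0 := by
    have := hwg 5; simpa [hG, LinearMap.flip_apply] using this
  have hwL₁ : ∀ l ∈ L₁, B w l = 0 := by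
    intro l hl; obtain ⟨c₀, c₁, rfl⟩ := hrep₁ l hl
    simp [map_add, map_smul, hwa₀, hwa₁]
  have hwL₂ : ∀ l ∈ L₂, B w l = 0 := by
    intro l hl; obtain ⟨c₀, c₁, rfl⟩ := hrep₂ l hl
    simp [map_add, map_smul, hwb₀, hwb₁]
  have hT1w : Tmap B u₁ w ∈ 𝔥 := h₁ w hw1 hwL₁
  have hT2w : Tmap B u₂ w ∈ 𝔥 := h₂ w hw2 hwL₂
  by_cases hww : B w w = 0
  · -- `w` is isotropic
    by_cases hex : ∃ x : V, B x u₂ = 0 ∧ (∀ l ∈ L₂, B x l = 0) ∧ B x w ≠ 0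
    · obtain ⟨x, hx1, hxL, hxw⟩ := hex
      have hT2x : Tmap B u₂ x ∈ 𝔥 := h₂ x hx1 hxL
      by_cases hey : ∃ y : V, B y u₁ = 0 ∧ (∀ l ∈ L₁, B y l = 0) ∧ B y w ≠ 0
      · obtain ⟨y, hy1, hyL, hyw⟩ := hey
        have hT1y : Tmap B u₁ y ∈ 𝔥 := h₁ y hy1 hyL
        by_cases hβ : B u₁ u₂ = 0
        · -- `β = 0`: a single bracket produces `T u₂ u₁`
          have e : (B x w) • Tmap B u₁ u₂
              = ⁅Tmap B u₂ x, Tmap B u₁ w⁆ - B x u₁ • Tmap B u₂ w := by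
            rw [lie_Tmap B hsymm, show B u₂ w = 0 from (hsymm u₂ w).trans hw2,
              show B u₂ u₁ = 0 from (hsymm u₂ u₁).trans hβ, Tmap_swap B u₂ u₁]
            module
          apply mem_of_smul_mem 𝔥 hxw
          rw [e]
          exact 𝔥.sub_mem (𝔥.lie_mem hT2x hT1w) (𝔥.smul_mem _ hT2w)
        · -- `β ≠ 0`
          have hA : ⁅Tmap B u₂ x, Tmap B u₁ w⁆ - B x u₁ • Tmap B u₂ w
              = B x w • Tmap B u₁ u₂ - B u₁ u₂ • Tmap B x w := by
            rw [lie_Tmap B hsymm, show B u₂ w = 0 from (hsymm u₂ w).trans hw2,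
              show B u₂ u₁ = B u₁ u₂ from hsymm u₂ u₁, Tmap_swap B u₂ u₁]
            module
          have hB : ⁅Tmap B u₁ y, Tmap B u₂ w⁆ - B y u₂ • Tmap B u₁ w
              = -(B y w • Tmap B u₁ u₂) - B u₁ u₂ • Tmap B y w := by
            rw [lie_Tmap B hsymm, show B u₁ w = 0 from (hsymm u₁ w).trans hw1]
            module
          have l1 : ⁅Tmap B u₁ u₂, Tmap B y w⁆ = B u₂ y • Tmap B u₁ w := by
            rw [lie_Tmap B hsymm, show B u₁ w = 0 from (hsymm u₁ w).trans hw1,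
              show B u₂ w = 0 from (hsymm u₂ w).trans hw2,
              show B u₁ y = 0 from (hsymm u₁ y).trans hy1]
            module
          have l2 : ⁅Tmap B x w, Tmap B u₁ u₂⁆ = B x u₁ • Tmap B u₂ w := by
            rw [lie_Tmap B hsymm, hw1, hx1, hw2, Tmap_swap B w u₂]
            module
          have l3 : ⁅Tmap B x w, Tmap B y w⁆
              = B y w • Tmap B x w - B x w • Tmap B y w := by
            rw [lie_Tmap B hsymm, show B w y = B y w from hsymm w y, hww,
              Tmap_swap B w y, Tmap_self]
            module
          set A : Module.End ℂ V := ⁅Tmap B u₂ x, Tmap B u₁ w⁆ - B x u₁ • Tmap B u₂ w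
            with hAdef
          set C : Module.End ℂ V := ⁅Tmap B u₁ y, Tmap B u₂ w⁆ - B y u₂ • Tmap B u₁ w
            with hCdef
          have hAmem : A ∈ 𝔥 := 𝔥.sub_mem (𝔥.lie_mem hT2x hT1w) (𝔥.smul_mem _ hT2w)
          have hCmem : C ∈ 𝔥 := 𝔥.sub_mem (𝔥.lie_mem hT1y hT2w) (𝔥.smul_mem _ hT1w)
          have h1 : ⁅A, C⁆
              = -((B x w) * (B u₁ u₂) * (B u₂ y)) • Tmap B u₁ w
                + ((B y w) * (B u₁ u₂) * (B x u₁)) • Tmap B u₂ w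
                + ((B u₁ u₂) * (B u₁ u₂) * (B y w)) • Tmap B x w
                - ((B u₁ u₂) * (B u₁ u₂) * (B x w)) • Tmap B y w := by
            rw [hA, hB]
            simp only [sub_lie, lie_sub, smul_lie, lie_smul, neg_lie, lie_neg, smul_neg,
              lie_self, smul_zero, neg_zero, neg_neg]
            rw [l1, l2, l3]
            module
          have h2 : (2 * (B x w) * (B y w) * (B u₁ u₂)) • Tmap B u₁ u₂
              = ⁅A, C⁆ + ((B x w) * (B u₁ u₂) * (B u₂ y)) • Tmap B u₁ w
                - ((B y w) * (B u₁ u₂) * (B x u₁)) • Tmap B u₂ w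
                + ((B u₁ u₂) * (B y w)) • A - ((B u₁ u₂) * (B x w)) • C := by
            rw [h1, hA, hB]
            module
          have hc0 : (2 * (B x w) * (B y w) * (B u₁ u₂)) ≠ 0 := by
            refine mul_ne_zero (mul_ne_zero (mul_ne_zero two_ne_zero hxw) hyw) hβ
          apply mem_of_smul_mem 𝔥 hc0
          rw [h2]
          exact 𝔥.sub_mem (𝔥.add_mem (𝔥.sub_mem (𝔥.add_mem (𝔥.lie_mem hAmem hCmem)
            (𝔥.smul_mem _ hT1w)) (𝔥.smul_mem _ hT2w)) (𝔥.smul_mem _ hAmem))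
            (𝔥.smul_mem _ hCmem)
      · -- every vector in `W₁` is orthogonal to `w`, so `w ∈ ℂu₁`
        push_neg at hey
        obtain ⟨c, hc⟩ := scalar_of_perp B hsymm hnd L₁ hL₁ hL₁nd u₁ hu₁L w hwL₁
          (fun z hz1 hzL => hey z hz1 hzL)
        have hcne : c ≠ 0 := by rintro rfl; simp at hc; exact hw0 hc
        have h12 : B u₁ u₂ = 0 := by
          have : B w u₂ = c * B u₁ u₂ := by rw [hc]; simp [map_smul, smul_eq_mul]
          rw [hw2] at this
          exact (mul_eq_zero.mp this.symm).resolve_left hcne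
        have h1L₂ : ∀ l ∈ L₂, B u₁ l = 0 := by
          intro l hl
          have : B w l = c * B u₁ l := by rw [hc]; simp [map_smul, smul_eq_mul]
          rw [hwL₂ l hl] at this
          exact (mul_eq_zero.mp this.symm).resolve_left hcne
        have := h₂ u₁ h12 h1L₂
        rw [show Tmap B u₂ u₁ = - Tmap B u₁ u₂ from Tmap_swap B u₂ u₁] at this
        simpa using 𝔥.smul_mem (-1 : ℂ) this
    · -- every vector in `W₂` is orthogonal to `w`, so `w ∈ ℂu₂`
      push_neg at hex
      obtain ⟨c, hc⟩ := scalar_of_perp B hsymm hnd L₂ hL₂ hL₂nd u₂ hu₂L w hwL₂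
        (fun z hz1 hzL => hex z hz1 hzL)
      have hcne : c ≠ 0 := by rintro rfl; simp at hc; exact hw0 hc
      have h21 : B u₂ u₁ = 0 := by
        have : B w u₁ = c * B u₂ u₁ := by rw [hc]; simp [map_smul, smul_eq_mul]
        rw [hw1] at this
        exact (mul_eq_zero.mp this.symm).resolve_left hcne
      have h2L₁ : ∀ l ∈ L₁, B u₂ l = 0 := by
        intro l hl
        have : B w l = c * B u₂ l := by rw [hc]; simp [map_smul, smul_eq_mul]
        rw [hwL₁ l hl] at this
        exact (mul_eq_zero.mp this.symm).resolve_left hcne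
      exact h₁ u₂ h21 h2L₁
  · -- `B w w ≠ 0`: a single bracket gives the result
    have e : (B w w) • Tmap B u₁ u₂ = ⁅Tmap B u₂ w, Tmap B u₁ w⁆ := by
      rw [lie_Tmap B hsymm, hw1, show B u₂ w = 0 from (hsymm u₂ w).trans hw2,
        Tmap_self, Tmap_swap B u₂ u₁]
      module
    apply mem_of_smul_mem 𝔥 hww
    rw [e]
    exact 𝔥.lie_mem hT2w hT1w
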